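/- Let u : ℝ² → ℝ be five times continuously differentiable (e.g. C⁵ on a neighborhood of a fixed point (x,y), or C^∞). Define for h ≠ 0 Kumar's isotropic first-derivative stencil D_I(h) = (1/(2h)) [ (1/6)(u(x+h,y+h) − u(x−h,y+h)) + (4/6)(u(x+h,y) − u(x−h,y)) + (1/6)(u(x+h,y−h) − u(x−h,y−h)) ]. Then as h → 0, D_I(h) = ∂_x u(x,y) + (h²/6) Δ(∂_x u)(x,y) + O(h⁴), where Δ(∂_x u) = ∂_{xxx} u + ∂_{xyy} u; i.e., the leading-order error term involves only the Laplacian of ∂_x u and is therefore directionally independent (isotropic). -/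

import Mathlib

open Asymptotics Filter Topology Real


noncomputable def PX (g : ℝ × ℝ → ℝ) : ℝ × ℝ → ℝ := fun z => fderiv ℝ g z (1, 0)
noncomputable def PY (g : ℝ × ℝ → ℝ) : ℝ × ℝ → ℝ := fun z => fderiv ℝ g z (0, 1)

lemma contDiff_applyv {n : ℕ} {g : ℝ × ℝ → ℝ} (hg : ContDiff ℝ (n + 1 : ℕ) g) (v : ℝ × ℝ) :
    ContDiff ℝ (n : ℕ) (fun z => fderiv ℝ g z v) := by
  have h1 : ContDiff ℝ (n : ℕ) (fderiv ℝ g) := by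
    apply hg.fderiv_right
    norm_cast
  exact (ContinuousLinearMap.apply ℝ ℝ v).contDiff.comp h1

lemma contDiff_PX {n : ℕ} {g : ℝ × ℝ → ℝ} (hg : ContDiff ℝ (n + 1 : ℕ) g) :
    ContDiff ℝ (n : ℕ) (PX g) := contDiff_applyv hg _

lemma contDiff_PY {n : ℕ} {g : ℝ × ℝ → ℝ} (hg : ContDiff ℝ (n + 1 : ℕ) g) :
    ContDiff ℝ (n : ℕ) (PY g) := contDiff_applyv hg _

lemma fderiv_applyv {g : ℝ × ℝ → ℝ} (hg : ContDiff ℝ 2 g) (v w : ℝ × ℝ) (z : ℝ × ℝ) :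
    fderiv ℝ (fun z' => fderiv ℝ g z' v) z w = fderiv ℝ (fderiv ℝ g) z w v := by
  have hd : DifferentiableAt ℝ (fderiv ℝ g) z := by
    have : ContDiff ℝ (1 : ℕ) (fderiv ℝ g) := by
      apply hg.fderiv_right; norm_cast
    exact this.differentiable (by norm_num) z
  rw [fderiv_clm_apply hd (differentiableAt_const v)]
  simp

lemma swap_PXY {g : ℝ × ℝ → ℝ} (hg : ContDiff ℝ 2 g) : PX (PY g) = PY (PX g) := by
  funext z
  have hsymm := (hg.contDiffAt (x := z)).isSymmSndFDerivAt (by simp)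
  have h1 := fderiv_applyv hg (0,1) (1,0) z
  have h2 := fderiv_applyv hg (1,0) (0,1) z
  show (fderiv ℝ (fun z' => (fderiv ℝ g z') (0, 1)) z) (1, 0)
      = (fderiv ℝ (fun z' => (fderiv ℝ g z') (1, 0)) z) (0, 1)
  rw [h1, h2, hsymm (1,0) (0,1)]

lemma fderiv_eval {g : ℝ × ℝ → ℝ} (hg : DifferentiableAt ℝ g z) (v : ℝ × ℝ) :
    fderiv ℝ g z v = v.1 * PX g z + v.2 * PY g z := by
  have hv : v = v.1 • ((1:ℝ), (0:ℝ)) + v.2 • ((0:ℝ), (1:ℝ)) := by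
    ext <;> simp
  rw [show (fderiv ℝ g z) v
      = (fderiv ℝ g z) (v.1 • ((1:ℝ), (0:ℝ)) + v.2 • ((0:ℝ), (1:ℝ))) from by rw [← hv]]
  rw [map_add, map_smul, map_smul, smul_eq_mul, smul_eq_mul]
  rfl

lemma hasDerivAt_line {g : ℝ × ℝ → ℝ} (hg : Differentiable ℝ g) (z₀ v : ℝ × ℝ) (h₀ : ℝ) :
    HasDerivAt (fun h : ℝ => g (z₀ + h • v))
      (v.1 * PX g (z₀ + h₀ • v) + v.2 * PY g (z₀ + h₀ • v)) h₀ := by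
  have hc : HasDerivAt (fun h : ℝ => z₀ + h • v) v h₀ := by
    have := ((hasDerivAt_id h₀).smul_const v).const_add z₀
    simpa using this
  have := (hg (z₀ + h₀ • v)).hasFDerivAt.comp_hasDerivAt h₀ hc
  rwa [fderiv_eval (hg _) v] at this

lemma deriv_line {g : ℝ × ℝ → ℝ} (hg : Differentiable ℝ g) (z₀ v : ℝ × ℝ) :
    deriv (fun h : ℝ => g (z₀ + h • v))
      = fun h => v.1 * PX g (z₀ + h • v) + v.2 * PY g (z₀ + h • v) := by
  funext h₀
  exact (hasDerivAt_line hg z₀ v h₀).deriv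

theorem taylor_isBigO (n : ℕ) (f : ℝ → ℝ) (hf : ContDiff ℝ (n : ℕ) f) :
    (fun h : ℝ => f h - ∑ k ∈ Finset.range n, iteratedDeriv k f 0 / (Nat.factorial k) * h ^ k)
      =O[𝓝 (0:ℝ)] (fun h => h ^ n) := by
  induction n generalizing f with
  | zero =>
      simp only [Finset.range_zero, Finset.sum_empty, sub_zero, pow_zero]
      exact (hf.continuous.tendsto 0).isBigO_one (F := ℝ)
  | succ n IH =>
      have hf' : Differentiable ℝ f ∧ ContDiff ℝ (n : ℕ) (deriv f) := by
        have hf2 : ContDiff ℝ ((n : ℕ) + 1) f := by exact_mod_cast hf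
        rcases contDiff_succ_iff_deriv.mp hf2 with ⟨h1, _, h3⟩
        exact ⟨h1, h3⟩
      obtain ⟨hd, hdf⟩ := hf'
      have IH' := IH (deriv f) hdf
      -- the polynomial
      set c : ℕ → ℝ := fun k => iteratedDeriv k f 0 / (Nat.factorial k) with hc
      set P : ℝ → ℝ := fun h => ∑ k ∈ Finset.range (n+1), c k * h ^ k with hPdef
      have hP : ∀ h : ℝ, HasDerivAt P
          (∑ k ∈ Finset.range n, iteratedDeriv k (deriv f) 0 / (Nat.factorial k) * h ^ k) h := by
        intro h
        have h1 : HasDerivAt P (∑ k ∈ Finset.range (n+1), c k * (k * h ^ (k-1))) h := by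
          apply HasDerivAt.fun_sum
          intro k _
          exact (hasDerivAt_pow k h).const_mul (c k)
        convert h1 using 1
        rw [Finset.sum_range_succ']
        simp only [Nat.cast_zero, zero_mul, mul_zero, add_zero]
        apply Finset.sum_congr rfl
        intro k _
        have hfac : (Nat.factorial (k+1) : ℝ) = (k+1) * Nat.factorial k := by
          rw [Nat.factorial_succ]; push_cast; ring
        have hid : iteratedDeriv (k+1) f 0 = iteratedDeriv k (deriv f) 0 := by
          rw [iteratedDeriv_succ']
        simp only [hc, hid, Nat.add_sub_cancel, hfac]
        have hk : ((k:ℝ)+1) ≠ 0 := by positivity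
        have hkf : (Nat.factorial k : ℝ) ≠ 0 := by positivity
        field_simp
        push_cast
        ring
      set g : ℝ → ℝ := fun h => f h - P h with hgdef
      have hg0 : g 0 = 0 := by
        simp only [hgdef, hPdef, Finset.sum_range_succ']
        simp [hc, iteratedDeriv_zero]
      have hgderiv : ∀ h : ℝ, deriv g h
          = deriv f h - ∑ k ∈ Finset.range n,
              iteratedDeriv k (deriv f) 0 / (Nat.factorial k) * h ^ k := by
        intro h
        exact ((hd h).hasDerivAt.sub (hP h)).deriv
      obtain ⟨C, hC0, hCbound⟩ : ∃ C ≥ 0, ∀ᶠ h in 𝓝 (0:ℝ),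
          ‖deriv f h - ∑ k ∈ Finset.range n,
              iteratedDeriv k (deriv f) 0 / (Nat.factorial k) * h ^ k‖ ≤ C * ‖h ^ n‖ := by
        obtain ⟨C, hC0, hC⟩ := IH'.exists_nonneg
        exact ⟨C, hC0, hC.bound⟩
      rw [Metric.eventually_nhds_iff] at hCbound
      obtain ⟨ε, hε, hball⟩ := hCbound
      have key : ∀ h : ℝ, |h| < ε → ‖g h‖ ≤ C * ‖h ^ (n+1)‖ := by
        intro h hh
        have hgd : ∀ t ∈ Metric.closedBall (0:ℝ) |h|, DifferentiableAt ℝ g t := by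
          intro t _
          exact (hd t).sub (hP t).differentiableAt
        have hbd : ∀ t ∈ Metric.closedBall (0:ℝ) |h|, ‖deriv g t‖ ≤ C * |h| ^ n := by
          intro t ht
          have ht' : |t| ≤ |h| := by
            simpa [Real.dist_eq] using ht
          have htε : dist t (0:ℝ) < ε := by
            simpa [Real.dist_eq] using lt_of_le_of_lt ht' hh
          have := hball htε
          rw [hgderiv t]
          refine le_trans this ?_
          have : ‖t ^ n‖ ≤ |h| ^ n := by
            rw [norm_pow, Real.norm_eq_abs]
            exact pow_le_pow_left₀ (abs_nonneg t) ht' n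
          exact mul_le_mul_of_nonneg_left this hC0
        have h0 : (0:ℝ) ∈ Metric.closedBall (0:ℝ) |h| := by
          simp [abs_nonneg]
        have hh' : h ∈ Metric.closedBall (0:ℝ) |h| := by
          simp [Real.dist_eq]
        have := Convex.norm_image_sub_le_of_norm_deriv_le hgd hbd (convex_closedBall _ _) h0 hh'
        rw [hg0, sub_zero] at this
        refine le_trans this ?_
        rw [norm_pow, Real.norm_eq_abs, pow_succ, sub_zero, Real.norm_eq_abs, mul_assoc]
      rw [isBigO_iff]
      refine ⟨C, ?_⟩
      rw [Metric.eventually_nhds_iff]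
      exact ⟨ε, hε, fun {h} hh => key h (by simpa [Real.dist_eq] using hh)⟩

lemma iteratedDeriv_add' {n : ℕ} {f g : ℝ → ℝ} (hf : ContDiff ℝ (n : ℕ) f)
    (hg : ContDiff ℝ (n : ℕ) g) (x : ℝ) :
    iteratedDeriv n (fun h => f h + g h) x = iteratedDeriv n f x + iteratedDeriv n g x := by
  have := iteratedDerivWithin_add (Set.mem_univ x) uniqueDiffOn_univ
    (hf.contDiffWithinAt (s := Set.univ)) (hg.contDiffWithinAt (s := Set.univ))
  simpa [iteratedDerivWithin_univ, Pi.add_def, Pi.sub_def] using this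

lemma iteratedDeriv_sub' {n : ℕ} {f g : ℝ → ℝ} (hf : ContDiff ℝ (n : ℕ) f)
    (hg : ContDiff ℝ (n : ℕ) g) (x : ℝ) :
    iteratedDeriv n (fun h => f h - g h) x = iteratedDeriv n f x - iteratedDeriv n g x := by
  have := iteratedDerivWithin_sub (Set.mem_univ x) uniqueDiffOn_univ
    (hf.contDiffWithinAt (s := Set.univ)) (hg.contDiffWithinAt (s := Set.univ))
  simpa [iteratedDerivWithin_univ, Pi.add_def, Pi.sub_def] using this

lemma iteratedDeriv_cmul' {n : ℕ} {f : ℝ → ℝ} (hf : ContDiff ℝ (n : ℕ) f) (c : ℝ) (x : ℝ) :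
    iteratedDeriv n (fun h => c * f h) x = c * iteratedDeriv n f x := by
  have := iteratedDerivWithin_const_mul (Set.mem_univ x) uniqueDiffOn_univ c
    (hf.contDiffWithinAt (s := Set.univ))
  simpa [iteratedDerivWithin_univ] using this

lemma lineD1 {g : ℝ × ℝ → ℝ} (hg : Differentiable ℝ g) (v : ℝ × ℝ) :
    iteratedDeriv 1 (fun h : ℝ => g (h • v)) 0 = v.1 * PX g 0 + v.2 * PY g 0 := by
  rw [iteratedDeriv_one]
  have e0 : (fun h : ℝ => g (h • v)) = fun h : ℝ => g ((0 : ℝ × ℝ) + h • v) := by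
    funext h; rw [zero_add]
  rw [e0, deriv_line hg 0 v]
  simp

lemma lineD3 {g : ℝ × ℝ → ℝ} (hg : ContDiff ℝ (3 : ℕ) g) (v : ℝ × ℝ) :
    iteratedDeriv 3 (fun h : ℝ => g (h • v)) 0
      = v.1 ^ 3 * PX (PX (PX g)) 0 + 3 * v.1 ^ 2 * v.2 * PX (PX (PY g)) 0
        + 3 * v.1 * v.2 ^ 2 * PX (PY (PY g)) 0 + v.2 ^ 3 * PY (PY (PY g)) 0 := by
  have hgd : Differentiable ℝ g := hg.differentiable (by norm_num)
  have hX2 : ContDiff ℝ ((2 : ℕ) : ℕ∞) (PX g) := contDiff_PX (n := 2) (by exact_mod_cast hg)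
  have hY2 : ContDiff ℝ ((2 : ℕ) : ℕ∞) (PY g) := contDiff_PY (n := 2) (by exact_mod_cast hg)
  have hXd : Differentiable ℝ (PX g) := hX2.differentiable (by norm_num)
  have hYd : Differentiable ℝ (PY g) := hY2.differentiable (by norm_num)
  have hXXd : Differentiable ℝ (PX (PX g)) :=
    (contDiff_PX (n := 1) (by exact_mod_cast hX2)).differentiable (by norm_num)
  have hYXd : Differentiable ℝ (PY (PX g)) :=
    (contDiff_PY (n := 1) (by exact_mod_cast hX2)).differentiable (by norm_num)
  have hXYd : Differentiable ℝ (PX (PY g)) :=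
    (contDiff_PX (n := 1) (by exact_mod_cast hY2)).differentiable (by norm_num)
  have hYYd : Differentiable ℝ (PY (PY g)) :=
    (contDiff_PY (n := 1) (by exact_mod_cast hY2)).differentiable (by norm_num)
  have e0 : (fun h : ℝ => g (h • v)) = fun h : ℝ => g ((0 : ℝ × ℝ) + h • v) := by
    funext h; rw [zero_add]
  rw [show (3 : ℕ) = 2 + 1 from rfl, iteratedDeriv_succ,
    iteratedDeriv_succ, iteratedDeriv_one]
  rw [e0, deriv_line hgd 0 v]
  have L2 : deriv (fun h : ℝ => v.1 * PX g ((0:ℝ×ℝ) + h • v) + v.2 * PY g ((0:ℝ×ℝ) + h • v))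
      = fun h : ℝ => v.1 * (v.1 * PX (PX g) ((0:ℝ×ℝ) + h • v) + v.2 * PY (PX g) ((0:ℝ×ℝ) + h • v))
        + v.2 * (v.1 * PX (PY g) ((0:ℝ×ℝ) + h • v) + v.2 * PY (PY g) ((0:ℝ×ℝ) + h • v)) := by
    funext h₀
    exact (((hasDerivAt_line hXd 0 v h₀).const_mul v.1).add
      ((hasDerivAt_line hYd 0 v h₀).const_mul v.2)).deriv
  rw [L2]
  have L3 := (((((hasDerivAt_line hXXd 0 v 0).const_mul v.1).fun_add
      ((hasDerivAt_line hYXd 0 v 0).const_mul v.2)).const_mul v.1).fun_add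
    ((((hasDerivAt_line hXYd 0 v 0).const_mul v.1).fun_add
      ((hasDerivAt_line hYYd 0 v 0).const_mul v.2)).const_mul v.2)).deriv
  rw [L3]
  have hswg : PX (PY g) = PY (PX g) := swap_PXY (hg.of_le (by exact_mod_cast (by norm_num : (2:ℕ) ≤ 3)))
  have hswX : PX (PY (PX g)) = PY (PX (PX g)) := swap_PXY (by exact_mod_cast hX2)
  have hswY : PX (PY (PY g)) = PY (PX (PY g)) := swap_PXY (by exact_mod_cast hY2)
  rw [← hswX, ← hswg, ← hswY]
  simp only [zero_smul, add_zero]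
  ring

/-- Kumar's isotropic first-derivative stencil satisfies
`D_I(h) = ∂_x u + (h²/6)(∂_{xxx}u + ∂_{xyy}u) + O(h⁴)` as `h → 0`: the leading error term
is `(h²/6) Δ(∂_x u)`, a function of the Laplacian only, hence isotropic. -/
theorem kumar_isotropic_first_derivative
    (u : ℝ → ℝ → ℝ) (hu : ContDiff ℝ 5 (Function.uncurry u)) (x y : ℝ)
    (px pxxx pxyy : ℝ)
    (hpx : px = deriv (fun s => u s y) x)
    (hpxxx : pxxx = deriv (fun s => deriv (fun s' => deriv (fun s'' => u s'' y) s') s) x)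
    (hpxyy : pxyy = deriv (fun t => deriv (fun t' => deriv (fun s => u s t') x) t) y) :
    (fun h : ℝ =>
        (1 / (2 * h)) *
            ((1/6) * (u (x+h) (y+h) - u (x-h) (y+h))
              + (4/6) * (u (x+h) y - u (x-h) y)
              + (1/6) * (u (x+h) (y-h) - u (x-h) (y-h)))
          - (px + (h ^ 2 / 6) * (pxxx + pxyy)))
      =O[𝓝[≠] (0:ℝ)] (fun h : ℝ => h ^ 4) := by
  set w : ℝ × ℝ → ℝ := fun z => u (x + z.1) (y + z.2) with hwdef
  have hw5 : ContDiff ℝ ((5 : ℕ) : ℕ∞) w := by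
    have hline : ContDiff ℝ ((5 : ℕ) : ℕ∞) (fun z : ℝ × ℝ => (x + z.1, y + z.2)) :=
      (contDiff_const.add contDiff_fst).prodMk (contDiff_const.add contDiff_snd)
    exact (by exact_mod_cast hu : ContDiff ℝ ((5:ℕ) : ℕ∞) (Function.uncurry u)).comp hline
  have hw_d : Differentiable ℝ w :=
    hw5.differentiable (by norm_num)
  have hX4 : ContDiff ℝ ((4 : ℕ) : ℕ∞) (PX w) := contDiff_PX (n := 4) (by exact_mod_cast hw5)
  have hY4 : ContDiff ℝ ((4 : ℕ) : ℕ∞) (PY w) := contDiff_PY (n := 4) (by exact_mod_cast hw5)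
  have hX_d : Differentiable ℝ (PX w) :=
    hX4.differentiable (by norm_num)
  have hXX3 : ContDiff ℝ ((3 : ℕ) : ℕ∞) (PX (PX w)) := contDiff_PX (n := 3) (by exact_mod_cast hX4)
  have hXX_d : Differentiable ℝ (PX (PX w)) :=
    hXX3.differentiable (by norm_num)
  have hYX3 : ContDiff ℝ ((3 : ℕ) : ℕ∞) (PY (PX w)) := contDiff_PY (n := 3) (by exact_mod_cast hX4)
  have hYX_d : Differentiable ℝ (PY (PX w)) :=
    hYX3.differentiable (by norm_num)
  set v1 : ℝ × ℝ := (1, 1) with hv1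
  set v2 : ℝ × ℝ := (1, 0) with hv2
  set v3 : ℝ × ℝ := (1, -1) with hv3
  set τ1 : ℝ → ℝ := fun h => w (h • v1) with hτ1def
  set τ2 : ℝ → ℝ := fun h => w (h • v2) with hτ2def
  set τ3 : ℝ → ℝ := fun h => w (h • v3) with hτ3def
  have hτ1C : ContDiff ℝ ((5 : ℕ) : ℕ∞) τ1 := hw5.comp (contDiff_id.smul contDiff_const)
  have hτ2C : ContDiff ℝ ((5 : ℕ) : ℕ∞) τ2 := hw5.comp (contDiff_id.smul contDiff_const)
  have hτ3C : ContDiff ℝ ((5 : ℕ) : ℕ∞) τ3 := hw5.comp (contDiff_id.smul contDiff_const)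
  set N : ℝ → ℝ := fun h =>
      (1/6) * (τ1 h - τ3 (-h)) + (4/6) * (τ2 h - τ2 (-h))
        + (1/6) * (τ3 h - τ1 (-h)) with hNdef
  have hN5 : ContDiff ℝ ((5 : ℕ) : ℕ∞) N :=
    ((contDiff_const.mul (hτ1C.sub (hτ3C.comp contDiff_id.neg))).add
      (contDiff_const.mul (hτ2C.sub (hτ2C.comp contDiff_id.neg)))).add
      (contDiff_const.mul (hτ3C.sub (hτ1C.comp contDiff_id.neg)))
  have hNeq : ∀ h : ℝ, N h =
      (1/6) * (u (x+h) (y+h) - u (x-h) (y+h))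
        + (4/6) * (u (x+h) y - u (x-h) y)
        + (1/6) * (u (x+h) (y-h) - u (x-h) (y-h)) := by
    intro h
    simp only [hNdef, hτ1def, hτ2def, hτ3def, hwdef, hv1, hv2, hv3, Prod.smul_mk,
      smul_eq_mul]
    norm_num [sub_eq_add_neg]
  -- iterated derivative combination
  have hDk : ∀ k : ℕ, k ≤ 5 → iteratedDeriv k N 0 =
      (1/6) * (iteratedDeriv k τ1 0 - (-1 : ℝ) ^ k * iteratedDeriv k τ3 0)
      + (4/6) * (iteratedDeriv k τ2 0 - (-1 : ℝ) ^ k * iteratedDeriv k τ2 0)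
      + (1/6) * (iteratedDeriv k τ3 0 - (-1 : ℝ) ^ k * iteratedDeriv k τ1 0) := by
    intro k hk
    have h1C : ContDiff ℝ (k : ℕ) τ1 := hτ1C.of_le (by exact_mod_cast hk)
    have h2C : ContDiff ℝ (k : ℕ) τ2 := hτ2C.of_le (by exact_mod_cast hk)
    have h3C : ContDiff ℝ (k : ℕ) τ3 := hτ3C.of_le (by exact_mod_cast hk)
    have h1nC : ContDiff ℝ (k : ℕ) (fun h : ℝ => τ1 (-h)) := h1C.comp contDiff_id.neg
    have h2nC : ContDiff ℝ (k : ℕ) (fun h : ℝ => τ2 (-h)) := h2C.comp contDiff_id.neg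
    have h3nC : ContDiff ℝ (k : ℕ) (fun h : ℝ => τ3 (-h)) := h3C.comp contDiff_id.neg
    rw [hNdef]
    rw [iteratedDeriv_add'
      ((contDiff_const.mul (h1C.sub h3nC)).add (contDiff_const.mul (h2C.sub h2nC)))
      (contDiff_const.mul (h3C.sub h1nC)),
      iteratedDeriv_add' (contDiff_const.mul (h1C.sub h3nC)) (contDiff_const.mul (h2C.sub h2nC)),
      iteratedDeriv_cmul' (h1C.sub h3nC), iteratedDeriv_cmul' (h2C.sub h2nC),
      iteratedDeriv_cmul' (h3C.sub h1nC),
      iteratedDeriv_sub' h1C h3nC, iteratedDeriv_sub' h2C h2nC, iteratedDeriv_sub' h3C h1nC,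
      iteratedDeriv_comp_neg k τ1 0, iteratedDeriv_comp_neg k τ2 0,
      iteratedDeriv_comp_neg k τ3 0]
    simp [smul_eq_mul]
  have hD0 : iteratedDeriv 0 N 0 = 0 := by
    rw [hDk 0 (by norm_num)]; norm_num; ring
  have hD2 : iteratedDeriv 2 N 0 = 0 := by
    rw [hDk 2 (by norm_num)]; norm_num; ring
  have hD4 : iteratedDeriv 4 N 0 = 0 := by
    rw [hDk 4 (by norm_num)]; norm_num; ring
  have hD1 : iteratedDeriv 1 N 0 = 2 * PX w 0 := by
    rw [hDk 1 (by norm_num), hτ1def, hτ2def, hτ3def,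
      lineD1 hw_d v1, lineD1 hw_d v2, lineD1 hw_d v3]
    simp only [hv1, hv2, hv3]
    norm_num
    ring
  have hw3 : ContDiff ℝ ((3 : ℕ) : ℕ∞) w :=
    hw5.of_le (by exact_mod_cast (by norm_num : (3:ℕ) ≤ 5))
  have hD3 : iteratedDeriv 3 N 0 = 2 * PX (PX (PX w)) 0 + 2 * PX (PY (PY w)) 0 := by
    rw [hDk 3 (by norm_num), hτ1def, hτ2def, hτ3def,
      lineD3 (by exact_mod_cast hw3) v1, lineD3 (by exact_mod_cast hw3) v2,
      lineD3 (by exact_mod_cast hw3) v3]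
    simp only [hv1, hv2, hv3]
    norm_num
    ring
  -- identification of the partial derivatives
  have e0 : (fun s => u s y) = fun s => w ((-x, 0) + s • ((1:ℝ),(0:ℝ))) := by
    funext s
    simp [hwdef]
  have hpx' : px = PX w 0 := by
    rw [hpx, e0, deriv_line hw_d]
    norm_num
    rfl
  have E1 : deriv (fun s'' => u s'' y) = fun s' => PX w ((-x, 0) + s' • ((1:ℝ),(0:ℝ))) := by
    rw [e0, deriv_line hw_d]
    funext s'
    norm_num
  have E2 : deriv (fun s' : ℝ => PX w (((-x, 0) : ℝ × ℝ) + s' • ((1:ℝ),(0:ℝ))))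
      = fun s => PX (PX w) (((-x, 0) : ℝ × ℝ) + s • ((1:ℝ),(0:ℝ))) := by
    rw [deriv_line hX_d]
    funext s
    norm_num
  have hpxxx' : pxxx = PX (PX (PX w)) 0 := by
    rw [hpxxx]
    simp only [E1, E2]
    rw [deriv_line hXX_d]
    norm_num
    rfl
  have F1 : (fun t' => deriv (fun s => u s t') x)
      = fun t' => PX w ((0, -y) + t' • ((0:ℝ),(1:ℝ))) := by
    funext t'
    have f0 : (fun s => u s t') = fun s => w ((-x, t' - y) + s • ((1:ℝ),(0:ℝ))) := by
      funext s
      simp [hwdef]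
    rw [f0, deriv_line hw_d]
    norm_num
    rw [sub_eq_neg_add]
  have F2 : deriv (fun t' : ℝ => PX w ((0, -y) + t' • ((0:ℝ),(1:ℝ))))
      = fun t => PY (PX w) ((0, -y) + t • ((0:ℝ),(1:ℝ))) := by
    rw [deriv_line hX_d]
    funext t
    norm_num
  have hw2' : ContDiff ℝ ((2 : ℕ) : ℕ∞) w :=
    hw5.of_le (by exact_mod_cast (by norm_num : (2:ℕ) ≤ 5))
  have hsww : PX (PY w) = PY (PX w) := swap_PXY (by exact_mod_cast hw2')
  have hY2' : ContDiff ℝ (((2:ℕ) + 1 : ℕ) : ℕ∞) w :=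
    hw5.of_le (by exact_mod_cast (by norm_num : ((2:ℕ)+1:ℕ) ≤ 5))
  have hswY : PX (PY (PY w)) = PY (PX (PY w)) :=
    swap_PXY (by exact_mod_cast contDiff_PY (n := 2) (by exact_mod_cast hY2'))
  have hpxyy' : pxyy = PX (PY (PY w)) 0 := by
    rw [hpxyy]
    simp only [F1, F2]
    rw [deriv_line hYX_d]
    norm_num
    rw [hswY, hsww]
    rfl
  -- Taylor expansion
  have hBig := taylor_isBigO 5 N (by exact_mod_cast hN5)
  have hsum : (fun h : ℝ => N h - ∑ k ∈ Finset.range 5,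
        iteratedDeriv k N 0 / (Nat.factorial k) * h ^ k)
      = fun h : ℝ => N h - (2 * px * h + ((pxxx + pxyy) / 3) * h ^ 3) := by
    funext h
    rw [Finset.sum_range_succ, Finset.sum_range_succ, Finset.sum_range_succ,
      Finset.sum_range_succ, Finset.sum_range_succ, Finset.sum_range_zero,
      hD0, hD1, hD2, hD3, hD4, ← hpx', ← hpxxx', ← hpxyy']
    have f0 : (Nat.factorial 0 : ℝ) = 1 := by norm_num [Nat.factorial]
    have f1 : (Nat.factorial 1 : ℝ) = 1 := by norm_num [Nat.factorial]
    have f2 : (Nat.factorial 2 : ℝ) = 2 := by norm_num [Nat.factorial]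
    have f3 : (Nat.factorial 3 : ℝ) = 6 := by norm_num [Nat.factorial]
    have f4 : (Nat.factorial 4 : ℝ) = 24 := by norm_num [Nat.factorial]
    rw [f0, f1, f2, f3, f4]
    ring
  rw [hsum] at hBig
  obtain ⟨C, hC0, hCb⟩ := hBig.exists_nonneg
  have hev : ∀ᶠ h in 𝓝[≠] (0:ℝ),
      ‖N h - (2 * px * h + ((pxxx + pxyy) / 3) * h ^ 3)‖ ≤ C * ‖h ^ 5‖ :=
    hCb.bound.filter_mono nhdsWithin_le_nhds
  rw [isBigO_iff]
  refine ⟨C / 2, ?_⟩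
  filter_upwards [hev, eventually_mem_nhdsWithin] with h hb (hne : h ≠ 0)
  have habs : (0:ℝ) < |h| := abs_pos.mpr hne
  have hGh : (1 / (2 * h)) *
        ((1/6) * (u (x+h) (y+h) - u (x-h) (y+h))
          + (4/6) * (u (x+h) y - u (x-h) y)
          + (1/6) * (u (x+h) (y-h) - u (x-h) (y-h)))
        - (px + (h ^ 2 / 6) * (pxxx + pxyy))
      = (N h - (2 * px * h + ((pxxx + pxyy) / 3) * h ^ 3)) / (2 * h) := by
    rw [hNeq h]
    field_simp
    ring
  rw [hGh]
  have hb' : |N h - (2 * px * h + (pxxx + pxyy) / 3 * h ^ 3)| ≤ C * |h| ^ 5 := by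
    simpa [Real.norm_eq_abs, abs_pow] using hb
  have hne2 : |h| ≠ 0 := habs.ne'
  calc ‖(N h - (2 * px * h + (pxxx + pxyy) / 3 * h ^ 3)) / (2 * h)‖
      = |N h - (2 * px * h + (pxxx + pxyy) / 3 * h ^ 3)| / (2 * |h|) := by
        rw [Real.norm_eq_abs, abs_div, abs_mul, abs_two]
    _ ≤ (C * |h| ^ 5) / (2 * |h|) := by gcongr
    _ = C / 2 * |h| ^ 4 := by field_simp
    _ = C / 2 * ‖h ^ 4‖ := by rw [Real.norm_eq_abs, abs_pow]
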